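/- Let A > B be positive integers. If there exists an addition chain for 2^A − 1 of length L that contains 2^B − 1 as an element, then ℓ(2^{A+B} − 1) ≤ L + B + 1. -/

import Mathlib

/-- An addition chain of length `r` for `n`, given by `a : ℕ → ℕ`. -/
def IsAdditionChain (r : ℕ) (a : ℕ → ℕ) (n : ℕ) : Prop :=
  a 0 = 1 ∧ a r = n ∧ (∀ k, k < r → a k < a (k + 1)) ∧
    ∀ k, 1 ≤ k → k ≤ r → ∃ i j, i < k ∧ j < k ∧ a k = a i + a j

/-- Minimal length of an addition chain for `n`. -/
noncomputable def addLen (n : ℕ) : ℕ :=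
  sInf {r | ∃ a : ℕ → ℕ, IsAdditionChain r a n}

theorem stmt6 (A B L : ℕ) (hB : 0 < B) (hAB : B < A)
    (h : ∃ a : ℕ → ℕ, IsAdditionChain L a (2 ^ A - 1) ∧ ∃ i ≤ L, a i = 2 ^ B - 1) :
    addLen (2 ^ (A + B) - 1) ≤ L + B + 1 := by
  obtain ⟨a, ⟨ha0, haL, hmono, hsum⟩, i0, hi0L, hi0⟩ := h
  have h2A : 2 ≤ 2 ^ A := by
    calc 2 = 2 ^ 1 := (pow_one 2).symm
    _ ≤ 2 ^ A := Nat.pow_le_pow_right (by norm_num) (by omega)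
  have h2B : 2 ≤ 2 ^ B := by
    calc 2 = 2 ^ 1 := (pow_one 2).symm
    _ ≤ 2 ^ B := Nat.pow_le_pow_right (by norm_num) (by omega)
  have hpow : 2 ^ (A + B) = 2 ^ A * 2 ^ B := pow_add 2 A B
  have hkey : 2 ^ B * (2 ^ A - 1) + (2 ^ B - 1) = 2 ^ (A + B) - 1 := by
    have e1 : 1 ≤ 2 ^ A := by omega
    have e2 : 1 ≤ 2 ^ B := by omega
    have e3 : 1 ≤ 2 ^ (A + B) := Nat.one_le_two_pow
    zify [e1, e2, e3]
    rw [pow_add]; ring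
  set b : ℕ → ℕ := fun k =>
    if k ≤ L then a k
    else if k ≤ L + B then 2 ^ (k - L) * (2 ^ A - 1)
    else 2 ^ (A + B) - 1 with hb
  have hbL : ∀ k, k ≤ L → b k = a k := by
    intro k hk; simp [hb, hk]
  have hbmid : ∀ k, L ≤ k → k ≤ L + B → b k = 2 ^ (k - L) * (2 ^ A - 1) := by
    intro k hk1 hk2
    rcases eq_or_lt_of_le hk1 with h | h
    · simp [hb, ← h, haL]
    · have : ¬ k ≤ L := by omega
      simp [hb, this, hk2]
  have hbend : b (L + B + 1) = 2 ^ (A + B) - 1 := by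
    have h1 : ¬ L + B + 1 ≤ L := by omega
    have h2 : ¬ L + B + 1 ≤ L + B := by omega
    simp [hb, h1, h2]
  apply Nat.sInf_le
  refine ⟨b, ?_, hbend, ?_, ?_⟩
  · rw [hbL 0 (Nat.zero_le _)]; exact ha0
  · intro k hk
    rcases lt_or_ge k L with h | h
    · rw [hbL k (by omega), hbL (k+1) (by omega)]; exact hmono k h
    · rcases lt_or_ge k (L + B) with h2 | h2
      · rw [hbmid k (by omega) (by omega), hbmid (k+1) (by omega) (by omega)]
        have : (k + 1 - L) = (k - L) + 1 := by omega
        rw [this, pow_succ]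
        have hp : 0 < 2 ^ (k - L) * (2 ^ A - 1) :=
          Nat.mul_pos (Nat.pow_pos (by norm_num)) (by omega)
        nlinarith
      · have hk' : k = L + B := by omega
        subst hk'
        rw [hbmid (L + B) (by omega) (by omega), hbend]
        have hLB : L + B - L = B := by omega
        rw [hLB, ← hkey]
        omega
  · intro k hk1 hk2
    rcases le_or_gt k L with h | h
    · obtain ⟨i, j, hi, hj, hij⟩ := hsum k hk1 h
      exact ⟨i, j, hi, hj, by
        rw [hbL k h, hbL i (by omega), hbL j (by omega)]; exact hij⟩
    · rcases le_or_gt k (L + B) with h2 | h2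
      · refine ⟨k - 1, k - 1, by omega, by omega, ?_⟩
        rw [hbmid k (by omega) h2, hbmid (k-1) (by omega) (by omega)]
        have : (k - L) = (k - 1 - L) + 1 := by omega
        rw [this, pow_succ]
        ring
      · have hk' : k = L + B + 1 := by omega
        subst hk'
        refine ⟨L + B, i0, by omega, by omega, ?_⟩
        rw [hbend, hbmid (L + B) (by omega) (by omega), hbL i0 hi0L, hi0]
        have hLB : L + B - L = B := by omega
        rw [hLB]
        exact hkey.symm
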